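/- Let c₁, c₂ > 0, and define for (x₁,x₂) ∈ ℝ², A = (c₁²+c₂²)/2 + |τ(x₁)|² + |τ(x₂)|² and B = (|τ(x₂)|² − |τ(x₁)|² − c₁c₂)², with τ(x) = 1+e^{ix}. Then the discriminant satisfies A² − B = [(c₁−c₂)²/2 + 2|τ(x₂)|²]·[(c₁+c₂)²/2 + 2|τ(x₁)|²] ≥ 0, and both roots z± = A ± √(A²−B) of z² − 2Az + B are nonnegative reals. -/

import Mathlib

open Real

noncomputable section

/-- `τ(x) = 1 + e^{ix}`. -/
def tau (x : ℝ) : ℂ := 1 + Complex.exp (x * Complex.I)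

/-- `A = (c₁²+c₂²)/2 + |τ(x₁)|² + |τ(x₂)|²`. -/
def Aval (c₁ c₂ x₁ x₂ : ℝ) : ℝ :=
  (c₁ ^ 2 + c₂ ^ 2) / 2 + ‖tau x₁‖ ^ 2 + ‖tau x₂‖ ^ 2

/-- `B = (|τ(x₂)|² − |τ(x₁)|² − c₁c₂)²`. -/
def Bval (c₁ c₂ x₁ x₂ : ℝ) : ℝ :=
  (‖tau x₂‖ ^ 2 - ‖tau x₁‖ ^ 2 - c₁ * c₂) ^ 2

/-- The discriminant factors as
`A² − B = [(c₁−c₂)²/2 + 2|τ(x₂)|²]·[(c₁+c₂)²/2 + 2|τ(x₁)|²] ≥ 0`, and both roots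
`z± = A ± √(A²−B)` of `z² − 2Az + B` are nonnegative. -/
theorem discriminant_and_roots_nonneg (c₁ c₂ : ℝ) (hc₁ : 0 < c₁) (hc₂ : 0 < c₂)
    (x₁ x₂ : ℝ) :
    (Aval c₁ c₂ x₁ x₂ ^ 2 - Bval c₁ c₂ x₁ x₂ =
      ((c₁ - c₂) ^ 2 / 2 + 2 * ‖tau x₂‖ ^ 2) *
        ((c₁ + c₂) ^ 2 / 2 + 2 * ‖tau x₁‖ ^ 2)) ∧
    (0 ≤ Aval c₁ c₂ x₁ x₂ ^ 2 - Bval c₁ c₂ x₁ x₂) ∧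
    (0 ≤ Aval c₁ c₂ x₁ x₂ - Real.sqrt (Aval c₁ c₂ x₁ x₂ ^ 2 - Bval c₁ c₂ x₁ x₂)) ∧
    (0 ≤ Aval c₁ c₂ x₁ x₂ + Real.sqrt (Aval c₁ c₂ x₁ x₂ ^ 2 - Bval c₁ c₂ x₁ x₂)) ∧
    (∀ z : ℝ, (z = Aval c₁ c₂ x₁ x₂ - Real.sqrt (Aval c₁ c₂ x₁ x₂ ^ 2 - Bval c₁ c₂ x₁ x₂) ∨
        z = Aval c₁ c₂ x₁ x₂ + Real.sqrt (Aval c₁ c₂ x₁ x₂ ^ 2 - Bval c₁ c₂ x₁ x₂)) →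
      z ^ 2 - 2 * Aval c₁ c₂ x₁ x₂ * z + Bval c₁ c₂ x₁ x₂ = 0) := by
  set a := ‖tau x₁‖ ^ 2 with ha
  set b := ‖tau x₂‖ ^ 2 with hb
  have ha0 : 0 ≤ a := sq_nonneg _
  have hb0 : 0 ≤ b := sq_nonneg _
  have hA : Aval c₁ c₂ x₁ x₂ = (c₁ ^ 2 + c₂ ^ 2) / 2 + a + b := rfl
  have hB : Bval c₁ c₂ x₁ x₂ = (b - a - c₁ * c₂) ^ 2 := rfl
  have hfac : Aval c₁ c₂ x₁ x₂ ^ 2 - Bval c₁ c₂ x₁ x₂ =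
      ((c₁ - c₂) ^ 2 / 2 + 2 * b) * ((c₁ + c₂) ^ 2 / 2 + 2 * a) := by
    rw [hA, hB]; ring
  have hA0 : 0 ≤ Aval c₁ c₂ x₁ x₂ := by
    rw [hA]; positivity
  have hD0 : 0 ≤ Aval c₁ c₂ x₁ x₂ ^ 2 - Bval c₁ c₂ x₁ x₂ := by
    rw [hfac]; positivity
  have hsq : Real.sqrt (Aval c₁ c₂ x₁ x₂ ^ 2 - Bval c₁ c₂ x₁ x₂) ^ 2 =
      Aval c₁ c₂ x₁ x₂ ^ 2 - Bval c₁ c₂ x₁ x₂ := Real.sq_sqrt hD0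
  have hle : Real.sqrt (Aval c₁ c₂ x₁ x₂ ^ 2 - Bval c₁ c₂ x₁ x₂) ≤ Aval c₁ c₂ x₁ x₂ := by
    calc Real.sqrt (Aval c₁ c₂ x₁ x₂ ^ 2 - Bval c₁ c₂ x₁ x₂)
        ≤ Real.sqrt (Aval c₁ c₂ x₁ x₂ ^ 2) := by
          apply Real.sqrt_le_sqrt; have := sq_nonneg (b - a - c₁ * c₂); rw [hB]; linarith
      _ = Aval c₁ c₂ x₁ x₂ := by rw [Real.sqrt_sq hA0]
  refine ⟨hfac, hD0, by linarith, by positivity, ?_⟩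
  rintro z (rfl | rfl) <;> nlinarith [hsq]

end
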